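/- Let α > 0. The constant 2/α in the continuous Hilbert-type inequality is optimal: for every ε > 0 there exist nonnegative functions f, g ∈ L²(0,∞) with nonzero norms such that ∫_0^∞ ∫_0^∞ K_α(x,y) f(x) g(y) dy dx ≥ (2/α − ε) · ‖f‖_{L²(0,∞)} ‖g‖_{L²(0,∞)}. -/

import Mathlib

open MeasureTheory


private lemma rpow_contOn (r : ℝ) {s : Set ℝ} (hs : ∀ x ∈ s, x ≠ 0) :
    ContinuousOn (fun x : ℝ => x ^ r) s := fun x hx =>
  (Real.continuousAt_rpow_const x r (Or.inl (hs x hx))).continuousWithinAt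

private lemma rpow_intInt (r : ℝ) {a b : ℝ} (ha : 0 < a) (hb : 0 < b) :
    IntervalIntegrable (fun x : ℝ => x ^ r) volume a b := by
  apply ContinuousOn.intervalIntegrable
  apply rpow_contOn
  intro x hx
  rw [Set.mem_uIcc] at hx
  rcases hx with h | h <;> nlinarith [h.1, h.2]


/-- For `α > 0` the constant `2/α` in the continuous Hilbert-type inequality is optimal:
for every `ε > 0` there are nonnegative `f, g ∈ L²(0,∞)` with nonzero norms such that
`∫₀^∞ ∫₀^∞ (xy)^{α-1/2} / max(x,y)^{2α} f(x) g(y) dy dx ≥ (2/α - ε) ‖f‖_{L²} ‖g‖_{L²}`. -/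
theorem continuous_form_sharpness (α : ℝ) (hα : 0 < α) (ε : ℝ) (hε : 0 < ε) :
    ∃ f g : ℝ → ℝ, Measurable f ∧ Measurable g ∧
      (∀ x ∈ Set.Ioi (0:ℝ), 0 ≤ f x) ∧ (∀ x ∈ Set.Ioi (0:ℝ), 0 ≤ g x) ∧
      IntegrableOn (fun x => f x ^ 2) (Set.Ioi 0) ∧
      IntegrableOn (fun x => g x ^ 2) (Set.Ioi 0) ∧
      0 < Real.sqrt (∫ x in Set.Ioi (0:ℝ), f x ^ 2) ∧
      0 < Real.sqrt (∫ x in Set.Ioi (0:ℝ), g x ^ 2) ∧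
      (2/α - ε) * (Real.sqrt (∫ x in Set.Ioi (0:ℝ), f x ^ 2) *
          Real.sqrt (∫ x in Set.Ioi (0:ℝ), g x ^ 2))
        ≤ ∫ x in Set.Ioi (0:ℝ), ∫ y in Set.Ioi (0:ℝ),
            (x * y) ^ (α - 1/2) / (max x y) ^ (2*α) * f x * g y := by
  set L : ℝ := 2/(α^2*ε) + 1 with hLdef
  have hL0 : 0 < L := by positivity
  set T : ℝ := Real.exp L with hTdef
  have hT1 : 1 < T := by
    rw [hTdef]
    have := Real.exp_lt_exp.mpr hL0
    rwa [Real.exp_zero] at this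
  have hT0 : 0 < T := lt_trans one_pos hT1
  have hlogT : Real.log T = L := Real.log_exp L
  set f : ℝ → ℝ := (Set.Icc (1:ℝ) T).indicator (fun x => x ^ (-(1/2):ℝ)) with hfdef
  have hsub : Set.Icc (1:ℝ) T ⊆ Set.Ioi 0 := fun x hx => lt_of_lt_of_le one_pos hx.1
  have hmf : Measurable f := Measurable.indicator (by measurability) measurableSet_Icc
  have hnn : ∀ x ∈ Set.Ioi (0:ℝ), 0 ≤ f x := by
    intro x _
    apply Set.indicator_nonneg
    intro y hy
    exact Real.rpow_nonneg (le_trans zero_le_one hy.1) _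
  -- f² as an indicator
  have hf2 : (fun x => f x ^ 2) = (Set.Icc (1:ℝ) T).indicator (fun x => x ^ (-1:ℝ)) := by
    funext x
    by_cases hx : x ∈ Set.Icc (1:ℝ) T
    · have hx0 : (0:ℝ) ≤ x := le_of_lt (hsub hx)
      simp only [hfdef, Set.indicator_of_mem hx]
      rw [← Real.rpow_natCast (x ^ (-(1/2):ℝ)) 2, ← Real.rpow_mul hx0]
      norm_num
    · simp [hfdef, Set.indicator_of_notMem hx]
  have hIcc : ∀ F : ℝ → ℝ, ∫ x in Set.Icc (1:ℝ) T, F x = ∫ x in (1:ℝ)..T, F x := by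
    intro F
    rw [integral_Icc_eq_integral_Ioc, ← intervalIntegral.integral_of_le hT1.le]
  have h0uIcc : (0:ℝ) ∉ Set.uIcc (1:ℝ) T := Set.notMem_uIcc_of_lt one_pos hT0
  have hIntf2 : IntegrableOn (fun x => f x ^ 2) (Set.Ioi 0) := by
    rw [hf2]
    apply Integrable.integrableOn
    rw [integrable_indicator_iff measurableSet_Icc]
    apply ContinuousOn.integrableOn_Icc
    apply rpow_contOn
    intro x hx
    exact ne_of_gt (hsub hx)
  have hNorm : ∫ x in Set.Ioi (0:ℝ), f x ^ 2 = L := by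
    rw [hf2, setIntegral_indicator measurableSet_Icc,
      Set.inter_eq_self_of_subset_right hsub, hIcc]
    simp_rw [Real.rpow_neg_one]
    rw [integral_inv h0uIcc, div_one, hlogT]
  have hsqrt : 0 < Real.sqrt (∫ x in Set.Ioi (0:ℝ), f x ^ 2) := by
    rw [hNorm]; exact Real.sqrt_pos.mpr hL0
  refine ⟨f, f, hmf, hmf, hnn, hnn, hIntf2, hIntf2, hsqrt, hsqrt, ?_⟩
  rw [hNorm, Real.mul_self_sqrt hL0.le]
  -- the double integral
  have key : ∫ x in Set.Ioi (0:ℝ), ∫ y in Set.Ioi (0:ℝ),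
      (x * y) ^ (α - 1/2) / (max x y) ^ (2*α) * f x * f y
      = ∫ x in (1:ℝ)..T, (1/α) * (2 * x ^ (-1:ℝ) - x ^ (-α-1) - T ^ (-α) * x ^ (α-1)) := by
    have step1 : (fun x => ∫ y in Set.Ioi (0:ℝ),
        (x * y) ^ (α - 1/2) / (max x y) ^ (2*α) * f x * f y)
        = (Set.Icc (1:ℝ) T).indicator (fun x => x ^ (-(1/2):ℝ) *
            ∫ y in Set.Icc (1:ℝ) T, (x * y) ^ (α - 1/2) / (max x y) ^ (2*α) * y ^ (-(1/2):ℝ)) := by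
      funext x
      by_cases hx : x ∈ Set.Icc (1:ℝ) T
      · rw [Set.indicator_of_mem hx]
        have hfx : f x = x ^ (-(1/2):ℝ) := Set.indicator_of_mem hx _
        calc ∫ y in Set.Ioi (0:ℝ), (x * y) ^ (α - 1/2) / (max x y) ^ (2*α) * f x * f y
            = ∫ y in Set.Ioi (0:ℝ), x ^ (-(1/2):ℝ) *
                (Set.Icc (1:ℝ) T).indicator
                  (fun y => (x * y) ^ (α - 1/2) / (max x y) ^ (2*α) * y ^ (-(1/2):ℝ)) y := by
              refine integral_congr_ae (Filter.Eventually.of_forall fun y => ?_)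
              by_cases hy : y ∈ Set.Icc (1:ℝ) T
              · simp only [hfdef, Set.indicator_of_mem hy, Set.indicator_of_mem hx]
                ring
              · simp only [hfdef, Set.indicator_of_notMem hy]
                ring
          _ = x ^ (-(1/2):ℝ) * ∫ y in Set.Ioi (0:ℝ), (Set.Icc (1:ℝ) T).indicator
                  (fun y => (x * y) ^ (α - 1/2) / (max x y) ^ (2*α) * y ^ (-(1/2):ℝ)) y :=
              integral_const_mul _ _
          _ = _ := by
              rw [setIntegral_indicator measurableSet_Icc,
                Set.inter_eq_self_of_subset_right hsub]
      · rw [Set.indicator_of_notMem hx]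
        have hfx : f x = 0 := Set.indicator_of_notMem hx _
        simp [hfx]
    rw [step1, setIntegral_indicator measurableSet_Icc,
      Set.inter_eq_self_of_subset_right hsub]
    rw [show (∫ x in Set.Icc (1:ℝ) T, x ^ (-(1/2):ℝ) *
        ∫ y in Set.Icc (1:ℝ) T, (x * y) ^ (α - 1/2) / (max x y) ^ (2*α) * y ^ (-(1/2):ℝ))
        = ∫ x in Set.Icc (1:ℝ) T, (1/α) * (2 * x ^ (-1:ℝ) - x ^ (-α-1) - T ^ (-α) * x ^ (α-1))
      from ?_, hIcc]
    apply setIntegral_congr_fun measurableSet_Icc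
    intro x hx
    dsimp only
    have hx0 : (0:ℝ) < x := hsub hx
    -- the integrand in y is interval integrable
    have hKint : ∀ a b : ℝ, 0 < a → 0 < b → IntervalIntegrable
        (fun y => (x * y) ^ (α - 1/2) / (max x y) ^ (2*α) * y ^ (-(1/2):ℝ)) volume a b := by
      intro a b ha hb
      apply ContinuousOn.intervalIntegrable
      intro y hy
      rw [Set.mem_uIcc] at hy
      have hy0 : 0 < y := by rcases hy with h | h <;> nlinarith [h.1, h.2]
      have c1 : ContinuousWithinAt (fun y : ℝ => (x * y) ^ (α - 1/2)) (Set.uIcc a b) y := by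
        apply ContinuousAt.continuousWithinAt
        exact (Real.continuousAt_rpow_const (x * y) _
          (Or.inl (ne_of_gt (mul_pos hx0 hy0)))).comp (continuous_const.mul continuous_id).continuousAt
      have c2 : ContinuousWithinAt (fun y : ℝ => (max x y) ^ (2*α)) (Set.uIcc a b) y := by
        apply ContinuousAt.continuousWithinAt
        exact (Real.continuousAt_rpow_const (max x y) _
          (Or.inl (ne_of_gt (lt_max_of_lt_left hx0)))).comp
          (continuous_const.max continuous_id).continuousAt
      have c3 : ContinuousWithinAt (fun y : ℝ => y ^ (-(1/2):ℝ)) (Set.uIcc a b) y :=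
        (Real.continuousAt_rpow_const y _ (Or.inl (ne_of_gt hy0))).continuousWithinAt
      have hne : (max x y) ^ (2*α) ≠ 0 :=
        ne_of_gt (Real.rpow_pos_of_pos (lt_max_of_lt_left hx0) _)
      exact (c1.div c2 hne).mul c3
    rw [hIcc, ← intervalIntegral.integral_add_adjacent_intervals
      (hKint 1 x one_pos hx0) (hKint x T hx0 hT0)]
    have hA : (∫ y in (1:ℝ)..x, (x * y) ^ (α - 1/2) / (max x y) ^ (2*α) * y ^ (-(1/2):ℝ))
        = x ^ (-α-1/2) * ((x ^ α - 1) / α) := by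
      rw [show (∫ y in (1:ℝ)..x, (x * y) ^ (α - 1/2) / (max x y) ^ (2*α) * y ^ (-(1/2):ℝ))
          = ∫ y in (1:ℝ)..x, x ^ (-α-1/2) * y ^ (α-1) from ?_]
      · rw [intervalIntegral.integral_const_mul, integral_rpow (Or.inl (by linarith)),
          show α - 1 + 1 = α from by ring, Real.one_rpow]
      · apply intervalIntegral.integral_congr
        intro y hy
        rw [Set.uIcc_of_le hx.1] at hy
        have hy0 : 0 < y := lt_of_lt_of_le one_pos hy.1
        have hmax : max x y = x := max_eq_left hy.2
        have e1 : (x * y) ^ (α - 1/2) = x ^ (α - 1/2) * y ^ (α - 1/2) :=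
          Real.mul_rpow hx0.le hy0.le
        have e2 : x ^ (α - 1/2) / x ^ (2*α) = x ^ (-α-1/2) := by
          rw [← Real.rpow_sub hx0]; congr 1; ring
        have e3 : y ^ (α - 1/2) * y ^ (-(1/2):ℝ) = y ^ (α-1) := by
          rw [← Real.rpow_add hy0]; congr 1; ring
        simp only [hmax, e1]
        rw [show x ^ (α - 1/2) * y ^ (α - 1/2) / x ^ (2*α) * y ^ (-(1/2):ℝ)
            = (x ^ (α - 1/2) / x ^ (2*α)) * (y ^ (α - 1/2) * y ^ (-(1/2):ℝ)) from by ring,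
          e2, e3]
    have hB : (∫ y in x..T, (x * y) ^ (α - 1/2) / (max x y) ^ (2*α) * y ^ (-(1/2):ℝ))
        = x ^ (α-1/2) * ((x ^ (-α) - T ^ (-α)) / α) := by
      rw [show (∫ y in x..T, (x * y) ^ (α - 1/2) / (max x y) ^ (2*α) * y ^ (-(1/2):ℝ))
          = ∫ y in x..T, x ^ (α-1/2) * y ^ (-α-1) from ?_]
      · rw [intervalIntegral.integral_const_mul,
          integral_rpow (Or.inr ⟨by intro h; nlinarith, Set.notMem_uIcc_of_lt hx0 hT0⟩),
          show -α - 1 + 1 = -α from by ring, div_neg, ← neg_div, neg_sub]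
      · apply intervalIntegral.integral_congr
        intro y hy
        rw [Set.uIcc_of_le hx.2] at hy
        have hy0 : 0 < y := lt_of_lt_of_le hx0 hy.1
        have hmax : max x y = y := max_eq_right hy.1
        have e1 : (x * y) ^ (α - 1/2) = x ^ (α - 1/2) * y ^ (α - 1/2) :=
          Real.mul_rpow hx0.le hy0.le
        have e2 : y ^ (α - 1/2) / y ^ (2*α) = y ^ (-α-1/2) := by
          rw [← Real.rpow_sub hy0]; congr 1; ring
        have e3 : y ^ (-α-1/2) * y ^ (-(1/2):ℝ) = y ^ (-α-1) := by
          rw [← Real.rpow_add hy0]; congr 1; ring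
        simp only [hmax, e1]
        rw [show x ^ (α - 1/2) * y ^ (α - 1/2) / y ^ (2*α) * y ^ (-(1/2):ℝ)
            = x ^ (α - 1/2) * ((y ^ (α - 1/2) / y ^ (2*α)) * y ^ (-(1/2):ℝ)) from by ring,
          e2, e3]
    rw [hA, hB]
    have p1 : x ^ (-(1/2):ℝ) * x ^ (-α-1/2) = x ^ (-α-1) := by
      rw [← Real.rpow_add hx0]; congr 1; ring
    have p2 : x ^ (-(1/2):ℝ) * x ^ (α-1/2) = x ^ (α-1) := by
      rw [← Real.rpow_add hx0]; congr 1; ring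
    have p3 : x ^ (-α-1) * x ^ α = x ^ (-1:ℝ) := by
      rw [← Real.rpow_add hx0]; congr 1; ring
    have p4 : x ^ (α-1) * x ^ (-α) = x ^ (-1:ℝ) := by
      rw [← Real.rpow_add hx0]; congr 1; ring
    linear_combination ((x ^ α - 1) / α) * p1 + ((x ^ (-α) - T ^ (-α)) / α) * p2
      + (1/α) * p3 + (1/α) * p4
  rw [key]
  -- compute the last interval integral and conclude
  have i1 : (∫ x in (1:ℝ)..T, x ^ (-1:ℝ)) = L := by
    simp_rw [Real.rpow_neg_one]
    rw [integral_inv h0uIcc, div_one, hlogT]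
  have i2 : (∫ x in (1:ℝ)..T, x ^ (-α-1)) = (1 - T ^ (-α)) / α := by
    rw [integral_rpow (Or.inr ⟨by intro h; nlinarith, h0uIcc⟩),
      show -α - 1 + 1 = -α from by ring, Real.one_rpow, div_neg, ← neg_div, neg_sub]
  have i3 : (∫ x in (1:ℝ)..T, x ^ (α-1)) = (T ^ α - 1) / α := by
    rw [integral_rpow (Or.inl (by linarith)), show α - 1 + 1 = α from by ring, Real.one_rpow]
  have hint1 : IntervalIntegrable (fun x : ℝ => x ^ (-1:ℝ)) volume 1 T :=
    rpow_intInt _ one_pos hT0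
  have hint2 : IntervalIntegrable (fun x : ℝ => x ^ (-α-1)) volume 1 T :=
    rpow_intInt _ one_pos hT0
  have hint3 : IntervalIntegrable (fun x : ℝ => x ^ (α-1)) volume 1 T :=
    rpow_intInt _ one_pos hT0
  have expand : (∫ x in (1:ℝ)..T, (1/α) * (2 * x ^ (-1:ℝ) - x ^ (-α-1) - T ^ (-α) * x ^ (α-1)))
      = (1/α) * (2 * L - (1 - T ^ (-α)) / α - T ^ (-α) * ((T ^ α - 1) / α)) := by
    rw [intervalIntegral.integral_const_mul]
    rw [intervalIntegral.integral_sub (((hint1.const_mul 2).sub hint2)) (hint3.const_mul _)]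
    rw [intervalIntegral.integral_sub (hint1.const_mul 2) hint2]
    rw [intervalIntegral.integral_const_mul, intervalIntegral.integral_const_mul, i1, i2, i3]
  rw [expand]
  have hq : T ^ (-α) * T ^ α = 1 := by
    rw [← Real.rpow_add hT0]; simp
  have hTa0 : (0:ℝ) ≤ T ^ (-α) := Real.rpow_nonneg hT0.le _
  have hεL : ε * L = 2/α^2 + ε := by
    rw [hLdef]
    field_simp
  have hαne : α ≠ 0 := ne_of_gt hα
  rw [show (1/α) * (2 * L - (1 - T ^ (-α)) / α - T ^ (-α) * ((T ^ α - 1) / α))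
      = 2/α * L - (1 - T ^ (-α))/α^2 - (T ^ (-α) * T ^ α - T ^ (-α))/α^2 from by
    field_simp, hq]
  have hα2 : (0:ℝ) < α ^ 2 := by positivity
  have h1 : (1 - T ^ (-α)) / α ^ 2 ≤ 1 / α ^ 2 :=
    (div_le_div_iff_of_pos_right hα2).mpr (by linarith)
  have hexp : (2/α - ε) * L = 2/α * L - ε * L := by ring
  have h12 : 2/α^2 = 2 * (1/α^2) := by ring
  linarith
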